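/- Let I ⊂ ℝ be an interval and let φ : I → ℂ be such that φ and φ' are locally absolutely continuous on I (so φ is twice differentiable a.e. with φ'' ∈ L¹_loc(I)). Let |φ|' denote the a.e.-defined derivative of |φ| (equal to (φ'\overline{φ} + φ\overline{φ'})/(2|φ|) where φ ≠ 0 and 0 where φ = 0). Then the a.e.-defined function w = |φ|' · φ agrees a.e. on I with a locally absolutely continuous function, whose derivative w' satisfies |w'(x)| ≤ 3|φ'(x)|² + |φ(x)| |φ''(x)| for a.e. x ∈ I. -/

import Mathlib

open MeasureTheory Set Filter Topology

noncomputable section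

/-- Absolute continuity of `φ` on the segment `[c,d]`. -/
def ACOn (φ : ℝ → ℂ) (c d : ℝ) : Prop :=
  ∀ ε > (0 : ℝ), ∃ δ > (0 : ℝ), ∀ m : ℕ, ∀ p q : Fin m → ℝ,
    (∀ i, c ≤ p i ∧ p i ≤ q i ∧ q i ≤ d) →
    (∀ i j, i ≠ j → Disjoint (Ioo (p i) (q i)) (Ioo (p j) (q j))) →
    (∑ i, (q i - p i)) < δ → (∑ i, ‖φ (q i) - φ (p i)‖) < ε

/-- Local absolute continuity of `φ` on a set `I`: absolute continuity on every compact
subsegment of `I`. -/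
def LocACOn (φ : ℝ → ℂ) (I : Set ℝ) : Prop :=
  ∀ c d : ℝ, c ≤ d → Icc c d ⊆ I → ACOn φ c d

/-! ### Auxiliary lemmas -/

lemma ACOn.single {φ : ℝ → ℂ} {c d : ℝ} (h : ACOn φ c d) {ε : ℝ} (hε : 0 < ε) :
    ∃ δ > (0:ℝ), ∀ p q : ℝ, c ≤ p → p ≤ q → q ≤ d → q - p < δ → ‖φ q - φ p‖ < ε := by
  obtain ⟨δ, hδ, H⟩ := h ε hε
  refine ⟨δ, hδ, fun p q h1 h2 h3 h4 => ?_⟩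
  have := H 1 (fun _ => p) (fun _ => q) (fun i => ⟨h1, h2, h3⟩)
    (fun i j hij => absurd (Subsingleton.elim i j) hij) (by simpa using h4)
  simpa using this

lemma ACOn.continuousOn {φ : ℝ → ℂ} {c d : ℝ} (h : ACOn φ c d) :
    ContinuousOn φ (Icc c d) := by
  rw [Metric.continuousOn_iff]
  intro b hb ε hε
  obtain ⟨δ, hδ, H⟩ := h.single hε
  refine ⟨δ, hδ, fun a ha hab => ?_⟩
  rcases le_total a b with hle | hle
  · rw [dist_comm, dist_eq_norm]
    exact H a b ha.1 hle hb.2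
      (by rw [Real.dist_eq, abs_sub_comm] at hab; exact lt_of_le_of_lt (le_abs_self _) hab)
  · rw [dist_eq_norm]
    exact H b a hb.1 hle ha.2
      (by rw [Real.dist_eq] at hab; exact lt_of_le_of_lt (le_abs_self _) hab)

lemma ACOn.short_var {φ : ℝ → ℂ} {c d : ℝ} (h : ACOn φ c d) :
    ∃ δ > (0:ℝ), ∀ a b : ℝ, c ≤ a → a ≤ b → b ≤ d → b - a < δ →
      eVariationOn φ (Icc a b) ≤ 1 := by
  obtain ⟨δ, hδ, H⟩ := h 1 one_pos
  refine ⟨δ, hδ, fun a b hca hab hbd hlen => ?_⟩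
  apply iSup_le
  rintro ⟨m, u, hu, us⟩
  have mono_disj : ∀ i j : Fin m, (i:ℕ) < (j:ℕ) →
      Disjoint (Ioo (u (i:ℕ)) (u ((i:ℕ)+1))) (Ioo (u (j:ℕ)) (u ((j:ℕ)+1))) := by
    intro i j hij
    refine Set.disjoint_left.2 fun t ht ht' => ?_
    exact ((ht.2.trans_le ((hu (Nat.succ_le_of_lt hij)).trans ht'.1.le))).false
  have key : ∑ i ∈ Finset.range m, ‖φ (u (i+1)) - φ (u i)‖ < 1 := by
    have := H m (fun i : Fin m => u i) (fun i : Fin m => u (i+1))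
      (fun i => ⟨hca.trans (us i).1, hu (Nat.le_succ _), (us ((i:ℕ)+1)).2.trans hbd⟩)
      (fun i j hij => by
        rcases lt_or_gt_of_ne (fun e => hij (Fin.ext e) : (i:ℕ) ≠ (j:ℕ)) with hlt | hlt
        · exact mono_disj i j hlt
        · exact (mono_disj j i hlt).symm)
      ?_
    · calc ∑ i ∈ Finset.range m, ‖φ (u (i+1)) - φ (u i)‖
          = ∑ i : Fin m, ‖φ (u ((i:ℕ)+1)) - φ (u (i:ℕ))‖ :=
            (Fin.sum_univ_eq_sum_range (fun k => ‖φ (u (k+1)) - φ (u k)‖) m).symm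
        _ < 1 := this
    · calc (∑ i : Fin m, (u ((i:ℕ)+1) - u (i:ℕ)))
          = ∑ i ∈ Finset.range m, (u (i+1) - u i) :=
            Fin.sum_univ_eq_sum_range (fun k => u (k+1) - u k) m
        _ = u m - u 0 := Finset.sum_range_sub u m
        _ ≤ b - a := sub_le_sub (us m).2 (us 0).1
        _ < δ := hlen
  calc ∑ i ∈ Finset.range m, edist (φ (u (i+1))) (φ (u i))
      = ENNReal.ofReal (∑ i ∈ Finset.range m, ‖φ (u (i+1)) - φ (u i)‖) := by
        rw [ENNReal.ofReal_sum_of_nonneg (fun i _ => norm_nonneg _)]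
        exact Finset.sum_congr rfl fun i _ => by rw [edist_dist, dist_eq_norm]
    _ ≤ 1 := by
        rw [← ENNReal.ofReal_one]
        exact ENNReal.ofReal_le_ofReal key.le

lemma ACOn.boundedVariationOn {φ : ℝ → ℂ} {c d : ℝ} (h : ACOn φ c d) (hcd : c ≤ d) :
    BoundedVariationOn φ (Icc c d) := by
  obtain ⟨δ, hδ, H⟩ := h.short_var
  obtain ⟨n, hn⟩ := exists_nat_gt ((d - c) / δ)
  have hn0 : 0 < (n:ℝ) + 1 := by positivity
  set L : ℝ := (d - c) / ((n:ℝ) + 1) with hL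
  have hL0 : 0 ≤ L := div_nonneg (by linarith) hn0.le
  have hLδ : L < δ := by
    rw [hL, div_lt_iff₀ hn0]
    have h1 : (d - c) / δ < (n:ℝ) + 1 := hn.trans (by linarith)
    calc d - c = ((d - c)/δ) * δ := by field_simp
      _ < ((n:ℝ)+1) * δ := mul_lt_mul_of_pos_right h1 hδ
      _ = δ * ((n:ℝ)+1) := mul_comm _ _
  set t : ℕ → ℝ := fun k => c + k * L with ht
  have hmono : Monotone t := fun i j hij => by
    simp only [ht]
    have : (i:ℝ) ≤ j := Nat.cast_le.2 hij
    nlinarith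
  have htc : ∀ k, c ≤ t k := fun k => by
    simp only [ht]
    have : 0 ≤ (k:ℝ) * L := by positivity
    linarith
  have htd : ∀ k ≤ n + 1, t k ≤ d := by
    intro k hk
    have hk' : (k:ℝ) ≤ (n:ℝ)+1 := by exact_mod_cast hk
    simp only [ht]
    calc c + k * L ≤ c + ((n:ℝ)+1) * L := by nlinarith
      _ = d := by rw [hL]; field_simp; ring
  have key : ∀ k, k ≤ n + 1 → eVariationOn φ (Icc c (t k)) ≤ (k : ENNReal) := by
    intro k
    induction k with
    | zero =>
        intro _
        have : t 0 = c := by simp [ht]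
        rw [this, Set.Icc_self, eVariationOn.subsingleton φ Set.subsingleton_singleton]
        simp
    | succ k ih =>
        intro hk
        have hk' : k ≤ n + 1 := Nat.le_of_succ_le hk
        have h1 : t k ≤ t (k+1) := hmono (Nat.le_succ k)
        have step : eVariationOn φ (Icc (t k) (t (k+1))) ≤ 1 := by
          apply H (t k) (t (k+1)) (htc k) h1 (htd (k+1) hk)
          have : t (k+1) - t k = L := by simp only [ht]; push_cast; ring
          rw [this]; exact hLδ
        have hsum := eVariationOn.Icc_add_Icc φ (s := Set.univ) (htc k) h1 (Set.mem_univ _)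
        simp only [Set.univ_inter] at hsum
        rw [← hsum]
        push_cast
        exact add_le_add (ih hk') step
  have htop : t (n+1) = d := by
    have hcast : ((n+1 : ℕ):ℝ) = (n:ℝ)+1 := by push_cast; ring
    show c + ((n+1:ℕ):ℝ) * L = d
    rw [hcast, hL]
    field_simp; ring
  have := key (n+1) le_rfl
  rw [htop] at this
  exact ne_top_of_le_ne_top (ENNReal.natCast_ne_top (n+1)) this

/-! ### The pointwise function and its Lipschitz-type estimates -/

noncomputable def gfun (z w : ℂ) : ℂ :=
  (((w * (starRingEnd ℂ) z).re / ‖z‖ : ℝ) : ℂ) * z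

lemma gfun_zero_left (w : ℂ) : gfun 0 w = 0 := by simp [gfun]

lemma re_mul_conj_abs_le (w z : ℂ) :
    |(w * (starRingEnd ℂ) z).re| ≤ ‖w‖ * ‖z‖ := by
  calc |(w * (starRingEnd ℂ) z).re| ≤ ‖w * (starRingEnd ℂ) z‖ :=
        Complex.abs_re_le_norm _
    _ = ‖w‖ * ‖z‖ := by rw [norm_mul, Complex.norm_conj]

lemma gnorm (z w : ℂ) : ‖gfun z w‖ ≤ ‖w‖ * ‖z‖ := by
  rcases eq_or_ne z 0 with rfl | hz
  · simp [gfun]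
  · have hn : (0:ℝ) < ‖z‖ := norm_pos_iff.mpr hz
    rw [gfun, norm_mul, Complex.norm_real, Real.norm_eq_abs, abs_div, abs_of_pos hn, div_mul_cancel₀]
    · exact re_mul_conj_abs_le w z
    · exact hn.ne'

lemma unit_diff {z₁ z₂ : ℂ} (h₁ : z₁ ≠ 0) (h₂ : z₂ ≠ 0) :
    ‖z₁ * ((‖z₁‖ : ℝ) : ℂ)⁻¹ - z₂ * ((‖z₂‖ : ℝ) : ℂ)⁻¹‖
      ≤ 2 * ‖z₁ - z₂‖ / ‖z₂‖ := by
  set n₁ : ℝ := ‖z₁‖ with hn₁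
  set n₂ : ℝ := ‖z₂‖ with hn₂
  have hp₁ : (0:ℝ) < n₁ := norm_pos_iff.mpr h₁
  have hp₂ : (0:ℝ) < n₂ := norm_pos_iff.mpr h₂
  have hc₁ : ((n₁:ℝ):ℂ) ≠ 0 := by exact_mod_cast hp₁.ne'
  have hc₂ : ((n₂:ℝ):ℂ) ≠ 0 := by exact_mod_cast hp₂.ne'
  have heq : z₁ * ((n₁:ℝ):ℂ)⁻¹ - z₂ * ((n₂:ℝ):ℂ)⁻¹
      = (((n₂ - n₁ : ℝ):ℂ) * z₁ + ((n₁:ℝ):ℂ) * (z₁ - z₂)) / (((n₁:ℝ):ℂ) * ((n₂:ℝ):ℂ)) := by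
    field_simp
    push_cast; ring
  rw [heq, norm_div, norm_mul]
  have habs : ‖((n₁:ℝ):ℂ)‖ = n₁ := by
    rw [Complex.norm_real, Real.norm_eq_abs, abs_of_pos hp₁]
  have habs2 : ‖((n₂:ℝ):ℂ)‖ = n₂ := by
    rw [Complex.norm_real, Real.norm_eq_abs, abs_of_pos hp₂]
  rw [habs, habs2]
  have hnum : ‖((n₂ - n₁ : ℝ):ℂ) * z₁ + ((n₁:ℝ):ℂ) * (z₁ - z₂)‖
      ≤ 2 * n₁ * ‖z₁ - z₂‖ := by
    have h1 : ‖((n₂ - n₁ : ℝ):ℂ) * z₁‖ ≤ ‖z₁ - z₂‖ * n₁ := by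
      rw [norm_mul, Complex.norm_real, Real.norm_eq_abs]
      have : |n₂ - n₁| ≤ ‖z₂ - z₁‖ := by
        rw [hn₁, hn₂]
        exact abs_norm_sub_norm_le z₂ z₁
      rw [← hn₁]
      calc |n₂ - n₁| * n₁ ≤ ‖z₂ - z₁‖ * n₁ :=
            mul_le_mul_of_nonneg_right this hp₁.le
        _ = ‖z₁ - z₂‖ * n₁ := by
            rw [show z₂ - z₁ = -(z₁ - z₂) by ring, norm_neg]
    have h2 : ‖((n₁:ℝ):ℂ) * (z₁ - z₂)‖ = n₁ * ‖z₁ - z₂‖ := by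
      rw [norm_mul, habs]
    calc ‖((n₂ - n₁ : ℝ):ℂ) * z₁ + ((n₁:ℝ):ℂ) * (z₁ - z₂)‖
        ≤ ‖((n₂ - n₁ : ℝ):ℂ) * z₁‖ + ‖((n₁:ℝ):ℂ) * (z₁ - z₂)‖ :=
          norm_add_le _ _
      _ ≤ ‖z₁ - z₂‖ * n₁ + n₁ * ‖z₁ - z₂‖ := by rw [h2]; linarith
      _ = 2 * n₁ * ‖z₁ - z₂‖ := by ring
  calc ‖((n₂ - n₁ : ℝ):ℂ) * z₁ + ((n₁:ℝ):ℂ) * (z₁ - z₂)‖ / (n₁ * n₂)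
      ≤ 2 * n₁ * ‖z₁ - z₂‖ / (n₁ * n₂) :=
        div_le_div_of_nonneg_right hnum (by positivity)
    _ = 2 * ‖z₁ - z₂‖ / n₂ := by field_simp

lemma gfun_lip_left (z₁ z₂ w : ℂ) :
    ‖gfun z₁ w - gfun z₂ w‖ ≤ 3 * ‖w‖ * ‖z₁ - z₂‖ := by
  rcases eq_or_ne z₁ 0 with rfl | h₁
  · rw [gfun_zero_left, zero_sub, norm_neg]
    calc ‖gfun z₂ w‖ ≤ ‖w‖ * ‖z₂‖ := gnorm z₂ w
      _ ≤ 3 * ‖w‖ * ‖0 - z₂‖ := by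
          rw [zero_sub, norm_neg]
          nlinarith [norm_nonneg w, norm_nonneg z₂]
  rcases eq_or_ne z₂ 0 with rfl | h₂
  · rw [gfun_zero_left, sub_zero]
    calc ‖gfun z₁ w‖ ≤ ‖w‖ * ‖z₁‖ := gnorm z₁ w
      _ ≤ 3 * ‖w‖ * ‖z₁ - 0‖ := by
          rw [sub_zero]
          nlinarith [norm_nonneg w, norm_nonneg z₁]
  set n₁ : ℝ := ‖z₁‖ with hn₁
  set n₂ : ℝ := ‖z₂‖ with hn₂
  have hp₁ : (0:ℝ) < n₁ := norm_pos_iff.mpr h₁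
  have hp₂ : (0:ℝ) < n₂ := norm_pos_iff.mpr h₂
  set A : ℝ := (w * (starRingEnd ℂ) z₁).re with hA
  set B : ℝ := (w * (starRingEnd ℂ) z₂).re with hB
  have hsplit : gfun z₁ w - gfun z₂ w
      = (((A - B)/n₁ : ℝ):ℂ) * z₁ + ((B:ℝ):ℂ) * (z₁ * ((n₁:ℝ):ℂ)⁻¹ - z₂ * ((n₂:ℝ):ℂ)⁻¹) := by
    have hc₁ : ((n₁:ℝ):ℂ) ≠ 0 := by exact_mod_cast hp₁.ne'
    have hc₂ : ((n₂:ℝ):ℂ) ≠ 0 := by exact_mod_cast hp₂.ne'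
    simp only [gfun, ← hA, ← hB, ← hn₁, ← hn₂]
    push_cast
    field_simp
    ring
  rw [hsplit]
  have t1 : ‖(((A - B)/n₁ : ℝ):ℂ) * z₁‖ ≤ ‖w‖ * ‖z₁ - z₂‖ := by
    rw [norm_mul, Complex.norm_real, Real.norm_eq_abs, abs_div, abs_of_pos hp₁, ← hn₁, div_mul_cancel₀ _ hp₁.ne']
    have : A - B = (w * (starRingEnd ℂ) (z₁ - z₂)).re := by
      rw [hA, hB, map_sub, mul_sub, Complex.sub_re]
    rw [this]
    exact re_mul_conj_abs_le w (z₁ - z₂)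
  have t2 : ‖((B:ℝ):ℂ) * (z₁ * ((n₁:ℝ):ℂ)⁻¹ - z₂ * ((n₂:ℝ):ℂ)⁻¹)‖
      ≤ 2 * ‖w‖ * ‖z₁ - z₂‖ := by
    rw [norm_mul, Complex.norm_real, Real.norm_eq_abs]
    have hBle : |B| ≤ ‖w‖ * n₂ := re_mul_conj_abs_le w z₂
    calc |B| * ‖z₁ * ((n₁:ℝ):ℂ)⁻¹ - z₂ * ((n₂:ℝ):ℂ)⁻¹‖
        ≤ (‖w‖ * n₂) * (2 * ‖z₁ - z₂‖ / n₂) := by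
          apply mul_le_mul hBle (unit_diff h₁ h₂) (norm_nonneg _)
          positivity
      _ = 2 * ‖w‖ * ‖z₁ - z₂‖ := by field_simp
  calc ‖_‖ ≤ _ := norm_add_le _ _
    _ ≤ ‖w‖ * ‖z₁ - z₂‖ + 2 * ‖w‖ * ‖z₁ - z₂‖ :=
        add_le_add t1 t2
    _ = 3 * ‖w‖ * ‖z₁ - z₂‖ := by ring

lemma gfun_lip_right (z w₁ w₂ : ℂ) :
    ‖gfun z w₁ - gfun z w₂‖ ≤ ‖z‖ * ‖w₁ - w₂‖ := by
  rcases eq_or_ne z 0 with rfl | hz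
  · simp [gfun_zero_left]
  have hp : (0:ℝ) < ‖z‖ := norm_pos_iff.mpr hz
  have : gfun z w₁ - gfun z w₂
      = ((((w₁ - w₂) * (starRingEnd ℂ) z).re / ‖z‖ : ℝ):ℂ) * z := by
    simp only [gfun, sub_mul, Complex.sub_re, map_sub]
    push_cast
    ring_nf
  rw [this, norm_mul, Complex.norm_real, Real.norm_eq_abs, abs_div, abs_of_pos hp, div_mul_cancel₀ _ hp.ne']
  calc |((w₁ - w₂) * (starRingEnd ℂ) z).re| ≤ ‖w₁ - w₂‖ * ‖z‖ :=
        re_mul_conj_abs_le _ _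
    _ = ‖z‖ * ‖w₁ - w₂‖ := mul_comm _ _

/-! ### Topological / measure-theoretic auxiliary lemmas -/

lemma countable_isolated (Z : Set ℝ) : {x | x ∈ Z ∧ 𝓝[Z \ {x}] x = ⊥}.Countable := by
  set T := {x | x ∈ Z ∧ 𝓝[Z \ {x}] x = ⊥} with hT
  have key : ∀ x : T, ∃ pq : ℚ × ℚ, ((pq.1:ℝ) < (x:ℝ) ∧ (x:ℝ) < (pq.2:ℝ)) ∧
      Ioo (pq.1:ℝ) (pq.2:ℝ) ∩ Z ⊆ {(x:ℝ)} := by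
    rintro ⟨x, hxZ, hxb⟩
    have hbot : (∅ : Set ℝ) ∈ 𝓝[Z \ {x}] x := by rw [hxb]; exact Filter.mem_bot
    rw [mem_nhdsWithin] at hbot
    obtain ⟨u, huo, hxu, hsub⟩ := hbot
    obtain ⟨ε, hε, hball⟩ := Metric.isOpen_iff.1 huo x hxu
    obtain ⟨p, hp1, hp2⟩ := exists_rat_btwn (show x - ε < x by linarith)
    obtain ⟨q, hq1, hq2⟩ := exists_rat_btwn (show x < x + ε by linarith)
    refine ⟨(p, q), ⟨hp2, hq1⟩, ?_⟩
    rintro y ⟨⟨hy1, hy2⟩, hyZ⟩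
    by_contra hne
    refine hsub (⟨hball ?_, hyZ, hne⟩ : y ∈ u ∩ (Z \ {x}))
    rw [Metric.mem_ball, Real.dist_eq, abs_lt]
    constructor <;> nlinarith
  choose F hF1 hF2 using key
  have hinj : Function.Injective F := by
    intro x y hxy
    have hy1 := hF1 y
    rw [← hxy] at hy1
    have : (y:ℝ) ∈ Ioo ((F x).1 : ℝ) ((F x).2 : ℝ) ∩ Z := ⟨⟨hy1.1, hy1.2⟩, y.2.1⟩
    have := hF2 x this
    exact (Subtype.ext this).symm
  rw [← Set.countable_coe_iff]
  exact hinj.countable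

lemma ordConnected_ae_interior {I : Set ℝ} (hI : I.OrdConnected) :
    volume (I \ interior I) = 0 := by
  have hsub : I \ interior I ⊆ {x | IsLeast I x} ∪ {x | IsGreatest I x} := by
    rintro x ⟨hxI, hxni⟩
    by_contra hcon
    simp only [Set.mem_union, Set.mem_setOf_eq, not_or] at hcon
    obtain ⟨h1, h2⟩ := hcon
    have ha : ∃ a ∈ I, a < x := by
      by_contra hna
      push_neg at hna
      exact h1 ⟨hxI, hna⟩
    obtain ⟨a, haI, hax⟩ := ha
    have hb : ∃ b ∈ I, x < b := by
      by_contra hnb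
      push_neg at hnb
      exact h2 ⟨hxI, hnb⟩
    obtain ⟨b, hbI, hxb⟩ := hb
    have : x ∈ interior I :=
      mem_interior.2 ⟨Ioo a b, fun y hy => hI.out haI hbI ⟨hy.1.le, hy.2.le⟩, isOpen_Ioo, hax, hxb⟩
    exact hxni this
  apply measure_mono_null hsub
  apply measure_union_null
  · exact Set.Subsingleton.measure_zero (fun x hx y hy => hx.unique hy) _
  · exact Set.Subsingleton.measure_zero (fun x hx y hy => hx.unique hy) _

/-! ### Derivative of the combined function where `φ ≠ 0` -/

lemma hasDerivAt_gfun_comp {φ φ' : ℝ → ℂ} {x : ℝ} {D2 : ℂ}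
    (h1 : HasDerivAt φ (φ' x) x) (h2 : HasDerivAt φ' D2 x) (hz : φ x ≠ 0) :
    ∃ DW : ℂ, HasDerivAt (fun t => gfun (φ t) (φ' t)) DW x ∧
      ‖DW‖ ≤ 3 * ‖φ' x‖ ^ 2 + ‖φ x‖ * ‖D2‖ := by
  set z : ℂ := φ x with hzdef
  set v : ℂ := φ' x with hvdef
  set a : ℝ → ℝ := fun t => (φ' t * (starRingEnd ℂ) (φ t)).re with hadef
  set r : ℝ → ℝ := fun t => ‖φ t‖ with hrdef
  have hr0 : 0 < r x := norm_pos_iff.mpr hz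
  have hconj : HasDerivAt (fun t => (starRingEnd ℂ) (φ t)) ((starRingEnd ℂ) v) x := by
    simpa only [Complex.star_def] using h1.star
  set a' : ℝ := (D2 * (starRingEnd ℂ) z + v * (starRingEnd ℂ) v).re with ha'def
  have ha : HasDerivAt a a' x := by
    have hmul : HasDerivAt (fun t => φ' t * (starRingEnd ℂ) (φ t))
        (D2 * (starRingEnd ℂ) z + v * (starRingEnd ℂ) v) x := h2.mul hconj
    exact (Complex.reCLM.hasFDerivAt.comp_hasDerivAt x hmul :)
  have hnormsq : HasDerivAt (fun t => (φ t * (starRingEnd ℂ) (φ t)).re)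
      ((v * (starRingEnd ℂ) z + z * (starRingEnd ℂ) v).re) x :=
    (Complex.reCLM.hasFDerivAt.comp_hasDerivAt x (h1.mul hconj) :)
  have hre2 : (v * (starRingEnd ℂ) z + z * (starRingEnd ℂ) v).re = 2 * a x := by
    have : z * (starRingEnd ℂ) v = (starRingEnd ℂ) (v * (starRingEnd ℂ) z) := by
      rw [map_mul, Complex.conj_conj]; ring
    rw [Complex.add_re, this, Complex.conj_re]
    simp [hadef]
    ring
  have hrfun : r = fun t => Real.sqrt ((φ t * (starRingEnd ℂ) (φ t)).re) := by
    funext t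
    simp only [hrdef, Complex.mul_conj, Complex.ofReal_re, Complex.norm_def]
  have hne : (φ x * (starRingEnd ℂ) (φ x)).re ≠ 0 := by
    rw [Complex.mul_conj, Complex.ofReal_re]
    exact (Complex.normSq_pos.2 hz).ne'
  have hr : HasDerivAt r (a x / r x) x := by
    have hder := hnormsq.sqrt hne
    rw [hre2] at hder
    have heq : Real.sqrt ((φ x * (starRingEnd ℂ) (φ x)).re) = r x := (congrFun hrfun x).symm
    rw [heq, mul_div_mul_left _ _ (two_ne_zero)] at hder
    simp only [hrfun]
    rw [heq]
    exact hder
  have hh : HasDerivAt (fun t => a t / r t) ((a' * r x - a x * (a x / r x)) / (r x)^2) x :=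
    ha.div hr hr0.ne'
  have hcoe : HasDerivAt (fun t => ((a t / r t : ℝ) : ℂ))
      (((a' * r x - a x * (a x / r x)) / (r x)^2 : ℝ) : ℂ) x :=
    Complex.ofRealCLM.hasFDerivAt.comp_hasDerivAt x hh
  have hW : HasDerivAt (fun t => gfun (φ t) (φ' t))
      ((((a' * r x - a x * (a x / r x)) / (r x)^2 : ℝ):ℂ) * z + ((a x / r x : ℝ):ℂ) * v) x :=
    hcoe.mul h1
  refine ⟨_, hW, ?_⟩
  set s : ℝ := a x / r x with hsdef
  have hrw : (a' * r x - a x * s) / (r x)^2 = (a' - s^2) / r x := by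
    rw [hsdef]
    field_simp
    skip
  have haxle : |a x| ≤ ‖v‖ * r x := re_mul_conj_abs_le v z
  have hs : |s| ≤ ‖v‖ := by
    rw [hsdef, abs_div, abs_of_pos hr0, div_le_iff₀ hr0]
    exact haxle
  have ha'le : |a'| ≤ ‖D2‖ * r x + (‖v‖)^2 := by
    rw [ha'def]
    calc |(D2 * (starRingEnd ℂ) z + v * (starRingEnd ℂ) v).re|
        ≤ |(D2 * (starRingEnd ℂ) z).re| + |(v * (starRingEnd ℂ) v).re| := by
          rw [Complex.add_re]; exact abs_add_le _ _
      _ ≤ ‖D2‖ * r x + (‖v‖)^2 := by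
          have h1' := re_mul_conj_abs_le D2 z
          have h2' : |(v * (starRingEnd ℂ) v).re| = (‖v‖)^2 := by
            rw [Complex.mul_conj, Complex.ofReal_re, abs_of_nonneg (Complex.normSq_nonneg v),
              Complex.sq_norm]
          rw [h2']
          exact add_le_add h1' (le_refl _)
  calc ‖(((a' * r x - a x * s) / (r x)^2 : ℝ):ℂ) * z + ((s : ℝ):ℂ) * v‖
      ≤ ‖(((a' * r x - a x * s) / (r x)^2 : ℝ):ℂ) * z‖
        + ‖((s : ℝ):ℂ) * v‖ := norm_add_le _ _
    _ = |(a' - s^2)| / r x * r x + |s| * ‖v‖ := by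
        rw [hrw, norm_mul, norm_mul, Complex.norm_real, Real.norm_eq_abs, Complex.norm_real, Real.norm_eq_abs, abs_div,
          abs_of_pos hr0]
    _ = |(a' - s^2)| + |s| * ‖v‖ := by
        rw [div_mul_cancel₀ _ hr0.ne']
    _ ≤ (|a'| + s^2) + |s| * ‖v‖ := by
        have : |a' - s^2| ≤ |a'| + s^2 := by
          calc |a' - s^2| ≤ |a'| + |s^2| := abs_sub _ _
            _ = |a'| + s^2 := by rw [abs_pow, sq_abs]
        linarith
    _ ≤ 3 * ‖v‖ ^ 2 + r x * ‖D2‖ := by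
        have h1' : s^2 ≤ ‖v‖ ^ 2 := by
          rw [← sq_abs s]
          exact pow_le_pow_left₀ (abs_nonneg s) hs 2
        have h2' : |s| * ‖v‖ ≤ ‖v‖ ^ 2 := by
          nlinarith [norm_nonneg v]
        nlinarith
    _ = 3 * ‖φ' x‖ ^ 2 + ‖φ x‖ * ‖D2‖ := rfl

/-- for `φ` with `φ, φ'` locally absolutely continuous, the a.e.-defined
function `|φ|'·φ` agrees a.e. with a locally absolutely continuous function whose derivative
is bounded by `3|φ'|² + |φ||φ''|` a.e. -/
theorem statement18 (I : Set ℝ) (hI : I.OrdConnected) (φ φ' : ℝ → ℂ)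
    (hφ : LocACOn φ I)
    (hφ' : ∀ x ∈ I, HasDerivWithinAt φ (φ' x) I x)
    (hφ'AC : LocACOn φ' I) :
    ∃ W : ℝ → ℂ, LocACOn W I ∧
      (∀ᵐ x ∂(volume.restrict I),
        (φ x ≠ 0 → W x =
          ((φ' x * (starRingEnd ℂ) (φ x) + φ x * (starRingEnd ℂ) (φ' x))
            / (2 * ((‖φ x‖ : ℝ) : ℂ))) * φ x) ∧
        (φ x = 0 → W x = 0)) ∧
      (∀ᵐ x ∂(volume.restrict I), ∃ D2 DW : ℂ,
        HasDerivAt φ' D2 x ∧ HasDerivAt W DW x ∧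
        ‖DW‖ ≤ 3 * ‖φ' x‖ ^ 2
          + ‖φ x‖ * ‖D2‖) := by
  refine ⟨fun t => gfun (φ t) (φ' t), ?_, ?_, ?_⟩
  · -- Local absolute continuity of W
    intro c d hcd hsub
    have hφcont : ContinuousOn φ (Icc c d) := fun x hx =>
      ((hφ' x (hsub hx)).continuousWithinAt).mono hsub
    have hφ'cont : ContinuousOn φ' (Icc c d) := (hφ'AC c d hcd hsub).continuousOn
    obtain ⟨M, hM⟩ := isCompact_Icc.exists_bound_of_continuousOn hφcont
    obtain ⟨M', hM'⟩ := isCompact_Icc.exists_bound_of_continuousOn hφ'cont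
    have hM0 : 0 ≤ M := le_trans (norm_nonneg _) (hM c ⟨le_refl c, hcd⟩)
    have hM'0 : 0 ≤ M' := le_trans (norm_nonneg _) (hM' c ⟨le_refl c, hcd⟩)
    have hpt : ∀ p q : ℝ, p ∈ Icc c d → q ∈ Icc c d →
        ‖gfun (φ q) (φ' q) - gfun (φ p) (φ' p)‖
          ≤ 3 * M' * ‖φ q - φ p‖ + M * ‖φ' q - φ' p‖ := by
      intro p q hp hq
      have hdecomp : gfun (φ q) (φ' q) - gfun (φ p) (φ' p)
          = (gfun (φ q) (φ' q) - gfun (φ p) (φ' q))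
            + (gfun (φ p) (φ' q) - gfun (φ p) (φ' p)) := by ring
      rw [hdecomp]
      have b1 : ‖gfun (φ q) (φ' q) - gfun (φ p) (φ' q)‖ ≤ 3 * M' * ‖φ q - φ p‖ := by
        have := gfun_lip_left (φ q) (φ p) (φ' q)
        calc ‖gfun (φ q) (φ' q) - gfun (φ p) (φ' q)‖
            ≤ 3 * ‖φ' q‖ * ‖φ q - φ p‖ := this
          _ ≤ 3 * M' * ‖φ q - φ p‖ := by
              have := hM' q hq
              nlinarith [norm_nonneg (φ q - φ p), norm_nonneg (φ' q)]
      have b2 : ‖gfun (φ p) (φ' q) - gfun (φ p) (φ' p)‖ ≤ M * ‖φ' q - φ' p‖ := by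
        have := gfun_lip_right (φ p) (φ' q) (φ' p)
        calc ‖gfun (φ p) (φ' q) - gfun (φ p) (φ' p)‖
            ≤ ‖φ p‖ * ‖φ' q - φ' p‖ := this
          _ ≤ M * ‖φ' q - φ' p‖ := by
              have := hM p hp
              nlinarith [norm_nonneg (φ' q - φ' p), norm_nonneg (φ p)]
      calc ‖_ + _‖ ≤ _ + _ := norm_add_le _ _
        _ ≤ 3 * M' * ‖φ q - φ p‖ + M * ‖φ' q - φ' p‖ := add_le_add b1 b2
    intro ε hε
    obtain ⟨δ₁, hδ₁, H₁⟩ := hφ c d hcd hsub (ε / (2 * (3*M' + 1))) (by positivity)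
    obtain ⟨δ₂, hδ₂, H₂⟩ := hφ'AC c d hcd hsub (ε / (2 * (M + 1))) (by positivity)
    refine ⟨min δ₁ δ₂, lt_min hδ₁ hδ₂, fun m p q hpq hdisj hsum => ?_⟩
    have s1 := H₁ m p q hpq hdisj (lt_of_lt_of_le hsum (min_le_left _ _))
    have s2 := H₂ m p q hpq hdisj (lt_of_lt_of_le hsum (min_le_right _ _))
    have sn1 : 0 ≤ ∑ i, ‖φ (q i) - φ (p i)‖ :=
      Finset.sum_nonneg fun i _ => norm_nonneg _
    have sn2 : 0 ≤ ∑ i, ‖φ' (q i) - φ' (p i)‖ :=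
      Finset.sum_nonneg fun i _ => norm_nonneg _
    calc (∑ i, ‖gfun (φ (q i)) (φ' (q i)) - gfun (φ (p i)) (φ' (p i))‖)
        ≤ ∑ i, (3 * M' * ‖φ (q i) - φ (p i)‖ + M * ‖φ' (q i) - φ' (p i)‖) :=
          Finset.sum_le_sum fun i _ => hpt (p i) (q i)
            ⟨(hpq i).1, (hpq i).2.1.trans (hpq i).2.2⟩
            ⟨(hpq i).1.trans (hpq i).2.1, (hpq i).2.2⟩
      _ = 3 * M' * (∑ i, ‖φ (q i) - φ (p i)‖) + M * (∑ i, ‖φ' (q i) - φ' (p i)‖) := by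
          rw [Finset.sum_add_distrib, Finset.mul_sum, Finset.mul_sum]
      _ ≤ (3*M' + 1) * (∑ i, ‖φ (q i) - φ (p i)‖) + (M + 1) * (∑ i, ‖φ' (q i) - φ' (p i)‖) := by
          nlinarith
      _ < (3*M' + 1) * (ε / (2 * (3*M' + 1))) + (M + 1) * (ε / (2 * (M + 1))) := by
          apply add_lt_add
          · exact mul_lt_mul_of_pos_left s1 (by positivity)
          · exact mul_lt_mul_of_pos_left s2 (by positivity)
      _ = ε := by field_simp; ring
  · -- agreement with the formula
    refine Eventually.of_forall fun x => ⟨fun hzx => ?_, fun hzx => ?_⟩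
    · show gfun (φ x) (φ' x) = _
      have hconjrw : φ' x * (starRingEnd ℂ) (φ x) + φ x * (starRingEnd ℂ) (φ' x)
          = ((2 * (φ' x * (starRingEnd ℂ) (φ x)).re : ℝ) : ℂ) := by
        rw [show φ x * (starRingEnd ℂ) (φ' x)
            = (starRingEnd ℂ) (φ' x * (starRingEnd ℂ) (φ x)) by
          rw [map_mul, Complex.conj_conj]; ring]
        exact Complex.add_conj _
      rw [hconjrw, gfun]
      congr 1
      push_cast
      rw [mul_div_mul_left _ _ (two_ne_zero)]
    · show gfun (φ x) (φ' x) = 0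
      rw [hzx, gfun_zero_left]
  · -- a.e. differentiability with the bound
    have hImeas : MeasurableSet I := hI.measurableSet
    set Z : Set ℝ := {t | t ∈ I ∧ φ t = 0} with hZdef
    have e1 : ∀ᵐ x ∂(volume.restrict I), x ∈ I := ae_restrict_mem hImeas
    have e2 : ∀ᵐ x ∂(volume.restrict I), x ∈ interior I := by
      rw [ae_iff]
      rw [Measure.restrict_apply]
      · refine measure_mono_null ?_ (ordConnected_ae_interior hI)
        rintro y ⟨hyn, hyI⟩
        exact ⟨hyI, hyn⟩
      · exact MeasurableSet.compl (by simpa using isOpen_interior.measurableSet)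
    have hBV : LocallyBoundedVariationOn φ' I := by
      intro a b ha hb
      rcases le_or_gt a b with hab | hba
      · rw [Set.inter_eq_self_of_subset_right (hI.out ha hb)]
        exact (hφ'AC a b hab (hI.out ha hb)).boundedVariationOn hab
      · rw [Set.Icc_eq_empty (not_le.2 hba), Set.inter_empty]
        unfold BoundedVariationOn
        rw [eVariationOn.subsingleton φ' Set.subsingleton_empty]
        simp
    have e3 : ∀ᵐ x ∂(volume.restrict I), x ∈ I → DifferentiableWithinAt ℝ φ' I x :=
      ae_restrict_of_ae hBV.ae_differentiableWithinAt_of_mem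
    have e4 : ∀ᵐ x ∂(volume.restrict I), ¬(x ∈ Z ∧ 𝓝[Z \ {x}] x = ⊥) := by
      apply ae_restrict_of_ae
      have hvol : volume {x | x ∈ Z ∧ 𝓝[Z \ {x}] x = ⊥} = 0 :=
        (countable_isolated Z).measure_zero _
      exact measure_eq_zero_iff_ae_notMem.mp hvol
    filter_upwards [e1, e2, e3, e4] with x hx1 hx2 hx3 hx4
    have hInhds : I ∈ 𝓝 x := mem_interior_iff_mem_nhds.1 hx2
    have hD2' : DifferentiableAt ℝ φ' x := (hx3 hx1).differentiableAt hInhds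
    set D2 : ℂ := deriv φ' x with hD2def
    have hD2 : HasDerivAt φ' D2 x := hD2'.hasDerivAt
    have h1 : HasDerivAt φ (φ' x) x := (hφ' x hx1).hasDerivAt hInhds
    by_cases hz : φ x = 0
    · -- zero set case
      have hxZ : x ∈ Z := ⟨hx1, hz⟩
      have hacc : 𝓝[Z \ {x}] x ≠ ⊥ := fun hbot => hx4 ⟨hxZ, hbot⟩
      haveI hnb : (𝓝[Z \ {x}] x).NeBot := ⟨hacc⟩
      have hv0 : φ' x = 0 := by
        have t1 : Tendsto (slope φ x) (𝓝[Z \ {x}] x) (𝓝 (φ' x)) :=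
          (hasDerivAt_iff_tendsto_slope.1 h1).mono_left
            (nhdsWithin_mono x (fun y hy => hy.2))
        have t2 : Tendsto (slope φ x) (𝓝[Z \ {x}] x) (𝓝 0) := by
          refine Tendsto.congr' ?_ tendsto_const_nhds
          filter_upwards [self_mem_nhdsWithin] with y hy
          rw [slope_def_module, hy.1.2, hz]
          simp
        exact tendsto_nhds_unique t1 t2
      have hbound : ∀ y : ℝ, ‖slope (fun t => gfun (φ t) (φ' t)) x y‖
          ≤ ‖φ' y‖ * ‖slope φ x y‖ := by
        intro y
        rw [slope_def_module, slope_def_module]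
        have hWx : gfun (φ x) (φ' x) = 0 := by rw [hz, gfun_zero_left]
        rw [hWx, hz, sub_zero, sub_zero, norm_smul, norm_smul]
        have hg := gnorm (φ y) (φ' y)
        calc ‖(y - x)⁻¹‖ * ‖gfun (φ y) (φ' y)‖
            ≤ ‖(y - x)⁻¹‖ * (‖φ' y‖ * ‖φ y‖) :=
              mul_le_mul_of_nonneg_left hg (norm_nonneg _)
          _ = ‖φ' y‖ * (‖(y - x)⁻¹‖ * ‖φ y‖) := by ring
      have hlim : Tendsto (fun y => ‖φ' y‖ * ‖slope φ x y‖) (𝓝[≠] x) (𝓝 0) := by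
        have l1 : Tendsto (fun y => ‖φ' y‖) (𝓝[≠] x) (𝓝 ‖φ' x‖) :=
          (hD2.continuousAt.norm.tendsto).mono_left nhdsWithin_le_nhds
        have l2 : Tendsto (fun y => ‖slope φ x y‖) (𝓝[≠] x) (𝓝 ‖φ' x‖) :=
          (hasDerivAt_iff_tendsto_slope.1 h1).norm
        have := l1.mul l2
        rw [hv0] at this
        simpa using this
      have hW0 : HasDerivAt (fun t => gfun (φ t) (φ' t)) 0 x := by
        rw [hasDerivAt_iff_tendsto_slope]
        exact squeeze_zero_norm' (Eventually.of_forall hbound) hlim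
      refine ⟨D2, 0, hD2, hW0, ?_⟩
      rw [norm_zero]
      have b1 : 0 ≤ ‖φ' x‖ := norm_nonneg _
      have b2 : 0 ≤ ‖φ x‖ := norm_nonneg _
      have b3 : 0 ≤ ‖D2‖ := norm_nonneg _
      nlinarith
    · obtain ⟨DW, hW, hb⟩ := hasDerivAt_gfun_comp h1 hD2 hz
      exact ⟨D2, DW, hD2, hW, hb⟩
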